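/- Let (J, cl) be a realizable convex 4-geometry with outermost layer L₀, and let f and g be two realizations of (J, cl) inducing the same clockwise circular order on L₀, i.e. sign(f a, f b, f c) = sign(g a, g b, g c) for all distinct a, b, c ∈ L₀. Then f and g induce the same order type on all of J: sign(f a, f b, f c) = sign(g a, g b, g c) for all distinct a, b, c ∈ J. -/

import Mathlib

open Set

/-- Orientation sign of a triple of points in the plane: the sign of the determinant of
the matrix with columns `y - x` and `z - x`. -/
noncomputable def osign (x y z : Fin 2 → ℝ) : ℝ :=
  Real.sign ((y 0 - x 0) * (z 1 - x 1) - (y 1 - x 1) * (z 0 - x 0))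

/-- A planar point set is in general position if no three distinct points are collinear. -/
def GenPos (X : Set (Fin 2 → ℝ)) : Prop :=
  ∀ x ∈ X, ∀ y ∈ X, ∀ z ∈ X, x ≠ y → y ≠ z → x ≠ z →
    ¬ Collinear ℝ ({x, y, z} : Set (Fin 2 → ℝ))

/-- A convex geometry on a finite set `J`: a closure operator satisfying the
anti-exchange axiom. -/
structure ConvexGeometry (J : Type) [Fintype J] where
  cl : Set J → Set J
  extensive : ∀ A : Set J, A ⊆ cl A
  mono : ∀ A B : Set J, A ⊆ B → cl A ⊆ cl B
  idem : ∀ A : Set J, cl (cl A) = cl A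
  antiExchange : ∀ A : Set J, cl A = A → ∀ x y : J, x ≠ y → x ∉ A → y ∉ A →
    x ∈ cl (A ∪ {y}) → y ∉ cl (A ∪ {x})

variable {J : Type} [Fintype J]

/-- A set is dependent if some element lies in the closure of the rest. -/
def ConvexGeometry.Dependent (G : ConvexGeometry J) (D : Set J) : Prop :=
  ∃ x ∈ D, x ∈ G.cl (D \ {x})

/-- A circuit is an inclusion-minimal dependent set. -/
def ConvexGeometry.IsCircuit (G : ConvexGeometry J) (C : Set J) : Prop :=
  G.Dependent C ∧ ∀ D ⊆ C, G.Dependent D → D = C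

/-- A convex 4-geometry: all circuits have exactly 4 elements. -/
def ConvexGeometry.Is4Geometry (G : ConvexGeometry J) : Prop :=
  ∀ C : Set J, G.IsCircuit C → C.ncard = 4

/-- `(T, a)` is a rooted triangle of `G` if `T ∪ {a}` is a circuit with root `a`. -/
def ConvexGeometry.RT (G : ConvexGeometry J) (T : Set J) (a : J) : Prop :=
  a ∉ T ∧ G.IsCircuit (insert a T) ∧ a ∈ G.cl T

/-- A realization of a convex geometry in the plane. -/
def IsRealization (G : ConvexGeometry J) (f : J → (Fin 2 → ℝ)) : Prop :=
  Function.Injective f ∧ GenPos (Set.range f) ∧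
    ∀ Y : Set J, f '' (G.cl Y) = convexHull ℝ (f '' Y) ∩ Set.range f

/-- `G.rest n` is the set `Jₙ` remaining after removing the first `n` layers. -/
def ConvexGeometry.rest (G : ConvexGeometry J) : ℕ → Set J
  | 0 => Set.univ
  | n + 1 => {x ∈ G.rest n | x ∈ G.cl (G.rest n \ {x})}

/-- The `n`-th layer: the extreme points of the restricted geometry on `G.rest n`. -/
def ConvexGeometry.layer (G : ConvexGeometry J) (n : ℕ) : Set J :=
  {x ∈ G.rest n | x ∉ G.cl (G.rest n \ {x})}

/-- The outermost layer (extreme points) of a convex geometry. -/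
def ConvexGeometry.L0 (G : ConvexGeometry J) : Set J :=
  {x : J | x ∉ G.cl (Set.univ \ {x})}

namespace OTAux

abbrev Pt := Fin 2 → ℝ

def Ldet (p q r : Pt) : ℝ := (q 0 - p 0) * (r 1 - p 1) - (q 1 - p 1) * (r 0 - p 0)

lemma osign_eq (p q r : Pt) : osign p q r = Real.sign (Ldet p q r) := rfl

lemma pt_ext {x y : Pt} (h0 : x 0 = y 0) (h1 : x 1 = y 1) : x = y := by
  funext i; fin_cases i <;> assumption

lemma Ldet_cycle (p q r : Pt) : Ldet q r p = Ldet p q r := by unfold Ldet; ring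

lemma osign_cycle (p q r : Pt) : osign q r p = osign p q r := by
  rw [osign_eq, osign_eq, Ldet_cycle]

lemma collinear_of_Ldet_eq_zero {p q r : Pt} (hpq : p ≠ q) (h : Ldet p q r = 0) :
    Collinear ℝ ({p, q, r} : Set Pt) := by
  rw [collinear_iff_of_mem (Set.mem_insert p {q, r})]
  refine ⟨q - p, ?_⟩
  intro x hx
  have key : ∀ y : Pt, Ldet p q y = 0 → ∃ ρ : ℝ, y = ρ • (q - p) +ᵥ p := by
    intro y hy
    unfold Ldet at hy
    by_cases h0 : q 0 - p 0 = 0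
    · have h1 : q 1 - p 1 ≠ 0 := by
        intro h1; exact hpq (pt_ext (by linarith) (by linarith)).symm
      have hy0 : y 0 - p 0 = 0 := by
        rw [h0] at hy; simp at hy
        rcases hy with h' | h'
        · exact absurd h' h1
        · exact h'
      refine ⟨(y 1 - p 1) / (q 1 - p 1), ?_⟩
      apply pt_ext
      · simp [vadd_eq_add, Pi.smul_apply, smul_eq_mul]
        rw [h0]; simp; linarith
      · simp [vadd_eq_add, Pi.smul_apply, smul_eq_mul]
        field_simp; ring
    · refine ⟨(y 0 - p 0) / (q 0 - p 0), ?_⟩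
      apply pt_ext
      · simp [vadd_eq_add, Pi.smul_apply, smul_eq_mul]
        field_simp; ring
      · simp [vadd_eq_add, Pi.smul_apply, smul_eq_mul]
        field_simp
        nlinarith [hy]
  rcases hx with rfl | rfl | rfl
  · exact ⟨0, by simp⟩
  · exact ⟨1, by simp⟩
  · exact key x (by unfold Ldet at h ⊢; linarith)

lemma Ldet_sum_eval (a b : Pt) {ι : Type*} (t : Finset ι) (w : ι → ℝ) (z : ι → Pt) :
    ∑ i ∈ t, w i * ((b 0 - a 0) * (z i 1 - a 1) - (b 1 - a 1) * (z i 0 - a 0))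
      = (b 0 - a 0) * ((∑ i ∈ t, w i * z i 1) - (∑ i ∈ t, w i) * a 1)
        - (b 1 - a 1) * ((∑ i ∈ t, w i * z i 0) - (∑ i ∈ t, w i) * a 0) := by
  induction t using Finset.cons_induction with
  | empty => simp
  | cons i t hi ih => simp only [Finset.sum_cons]; rw [ih]; ring

lemma Ldet_centerMass {a b : Pt} {ι : Type*} (t : Finset ι) (w : ι → ℝ) (z : ι → Pt)
    (hw : ∑ i ∈ t, w i = 1) :
    Ldet a b (t.centerMass w z) = ∑ i ∈ t, w i * Ldet a b (z i) := by
  rw [Finset.centerMass_eq_of_sum_1 _ _ hw]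
  unfold Ldet
  have h0 : (∑ i ∈ t, w i • z i) 0 = ∑ i ∈ t, w i * z i 0 := by
    rw [Finset.sum_apply]; simp [Pi.smul_apply, smul_eq_mul]
  have h1 : (∑ i ∈ t, w i • z i) 1 = ∑ i ∈ t, w i * z i 1 := by
    rw [Finset.sum_apply]; simp [Pi.smul_apply, smul_eq_mul]
  rw [h0, h1, Ldet_sum_eval a b t w z, hw]; ring

lemma Ldet_combo2 (a b x y : Pt) (c : ℝ) :
    Ldet a b ((1 - c) • x + c • y) = (1 - c) * Ldet a b x + c * Ldet a b y := by
  unfold Ldet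
  simp [Pi.add_apply, Pi.smul_apply, smul_eq_mul]
  ring

lemma Ldet_nonneg_of_mem_convexHull {a b x : Pt} {s : Set Pt}
    (hx : x ∈ convexHull ℝ s) (hs : ∀ p ∈ s, 0 ≤ Ldet a b p) : 0 ≤ Ldet a b x := by
  rw [convexHull_eq] at hx
  obtain ⟨ι, t, w, z, hw0, hw1, hz, hcm⟩ := hx
  rw [← hcm, Ldet_centerMass t w z hw1]
  exact Finset.sum_nonneg fun i hi => mul_nonneg (hw0 i hi) (hs _ (hz i hi))

lemma eq_of_Ldet_eq_zero {a b x y : Pt} {s : Set Pt}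
    (hx : x ∈ convexHull ℝ s) (hs : ∀ p ∈ s, 0 ≤ Ldet a b p) (hx0 : Ldet a b x = 0)
    (hy : ∀ p ∈ s, Ldet a b p = 0 → p = y) : x = y := by
  rw [convexHull_eq] at hx
  obtain ⟨ι, t, w, z, hw0, hw1, hz, hcm⟩ := hx
  have hsum : ∑ i ∈ t, w i * Ldet a b (z i) = 0 := by
    rw [← Ldet_centerMass t w z hw1, hcm, hx0]
  have hterm := (Finset.sum_eq_zero_iff_of_nonneg
    (fun i hi => mul_nonneg (hw0 i hi) (hs _ (hz i hi)))).1 hsum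
  have hzy : ∀ i ∈ t, w i • z i = w i • y := by
    intro i hi
    by_cases hwi : w i = 0
    · rw [hwi]; simp
    · have hLz : Ldet a b (z i) = 0 := by
        rcases mul_eq_zero.1 (hterm i hi) with h | h
        · exact absurd h hwi
        · exact h
      rw [hy _ (hz i hi) hLz]
  have hx' : x = ∑ i ∈ t, w i • z i := by
    rw [← hcm, Finset.centerMass_eq_of_sum_1 _ _ hw1]
  rw [hx', Finset.sum_congr rfl hzy, ← Finset.sum_smul, hw1, one_smul]

lemma mem_convexHull_triple {p q r x : Pt} {s : Set Pt}
    (hp : p ∈ s) (hq : q ∈ s) (hr : r ∈ s) {α β γ : ℝ}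
    (hα : 0 ≤ α) (hβ : 0 ≤ β) (hγ : 0 ≤ γ) (hsum : α + β + γ = 1)
    (hx : x = α • p + β • q + γ • r) : x ∈ convexHull ℝ s := by
  have hw0 : ∀ i ∈ (Finset.univ : Finset (Fin 3)), 0 ≤ (![α, β, γ]) i := by
    intro i _; fin_cases i <;> simpa
  have hwsum : (0:ℝ) < ∑ i ∈ (Finset.univ : Finset (Fin 3)), (![α, β, γ]) i := by
    simp [Fin.sum_univ_three]; linarith
  have hz : ∀ i ∈ (Finset.univ : Finset (Fin 3)), (![p, q, r]) i ∈ s := by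
    intro i _; fin_cases i <;> simpa
  have hmem := Finset.centerMass_mem_convexHull (s := s)
    (Finset.univ : Finset (Fin 3)) hw0 hwsum hz
  have hcm : (Finset.univ : Finset (Fin 3)).centerMass ![α, β, γ] ![p, q, r] = x := by
    rw [Finset.centerMass_eq_of_sum_1]
    · rw [hx]; simp [Fin.sum_univ_three]
    · simp [Fin.sum_univ_three]; linarith
  rwa [hcm] at hmem

lemma combo2_mem {x y u : Pt} {s : Set Pt} (hx : x ∈ convexHull ℝ s)
    (hy : y ∈ convexHull ℝ s) {c : ℝ} (h0 : 0 ≤ c) (h1 : c ≤ 1)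
    (hu : u = c • x + (1 - c) • y) : u ∈ convexHull ℝ s := by
  rw [hu]
  exact (convex_convexHull ℝ s) hx hy h0 (by linarith) (by linarith)


lemma Ldet_self_left (A B : Pt) : Ldet A B A = 0 := by unfold Ldet; ring
lemma Ldet_self_right (A B : Pt) : Ldet A B B = 0 := by unfold Ldet; ring

lemma seg_combo {A B p : Pt} (h : p ∈ segment ℝ A B) :
    ∃ c d : ℝ, 0 ≤ c ∧ 0 ≤ d ∧ c + d = 1 ∧ p = c • A + d • B := by
  obtain ⟨c, d, hc, hd, hcd, h⟩ := h
  exact ⟨c, d, hc, hd, hcd, h.symm⟩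

lemma seg_Ldet_zero {A B p : Pt} (h : p ∈ segment ℝ A B) : Ldet A B p = 0 := by
  obtain ⟨c, d, hc, hd, hcd, rfl⟩ := seg_combo h
  have hc' : c = 1 - d := by linarith
  subst hc'
  unfold Ldet
  simp [Pi.add_apply, Pi.smul_apply, smul_eq_mul]
  ring

lemma mem_seg_of_param {A B : Pt} {μ : ℝ} (h0 : 0 ≤ μ) (h1 : μ ≤ 1) :
    A + μ • (B - A) ∈ segment ℝ A B := by
  refine ⟨1 - μ, μ, by linarith, h0, by ring, ?_⟩
  funext i
  simp [Pi.add_apply, Pi.sub_apply, Pi.smul_apply, smul_eq_mul]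
  ring

lemma line_param {A B p : Pt} (hAB : A ≠ B) (h : Ldet A B p = 0) :
    ∃ μ : ℝ, p = A + μ • (B - A) := by
  unfold Ldet at h
  by_cases h0 : B 0 - A 0 = 0
  · have h1 : B 1 - A 1 ≠ 0 := by
      intro h1; exact hAB (pt_ext (by linarith) (by linarith)).symm
    have hp0 : p 0 - A 0 = 0 := by
      rw [h0] at h; simp at h
      rcases h with h' | h'
      · exact absurd h' h1
      · exact h'
    refine ⟨(p 1 - A 1) / (B 1 - A 1), ?_⟩
    apply pt_ext
    · simp [Pi.add_apply, Pi.sub_apply, Pi.smul_apply, smul_eq_mul]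
      rw [h0]; simp; linarith
    · simp [Pi.add_apply, Pi.sub_apply, Pi.smul_apply, smul_eq_mul]
      field_simp; ring
  · refine ⟨(p 0 - A 0) / (B 0 - A 0), ?_⟩
    apply pt_ext
    · simp [Pi.add_apply, Pi.sub_apply, Pi.smul_apply, smul_eq_mul]
      field_simp; ring
    · simp [Pi.add_apply, Pi.sub_apply, Pi.smul_apply, smul_eq_mul]
      field_simp
      nlinarith [h]

/-- Anti-exchange, in convex-hull form. -/
lemma antiexchange_pt {u w : Pt} {S : Set Pt} (huw : u ≠ w)
    (hu : u ∈ convexHull ℝ (insert w S)) (hw : w ∈ convexHull ℝ (insert u S)) :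
    u ∈ convexHull ℝ S := by
  rcases S.eq_empty_or_nonempty with rfl | hS
  · simp [convexHull_singleton] at hu
    exact absurd hu huw
  · rw [convexHull_insert hS, mem_convexJoin] at hu hw
    obtain ⟨w₀, hw₀, z1, hz1, huseg⟩ := hu
    obtain ⟨u₀, hu₀, z2, hz2, hwseg⟩ := hw
    rw [Set.mem_singleton_iff] at hw₀ hu₀
    rw [hw₀] at huseg; rw [hu₀] at hwseg
    obtain ⟨c₁, c₂, hc₁, hc₂, hc, hue⟩ := seg_combo huseg
    obtain ⟨d₁, d₂, hd₁, hd₂, hd, hwe⟩ := seg_combo hwseg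
    have hc2 : c₂ = 1 - c₁ := by linarith
    have hd2 : d₂ = 1 - d₁ := by linarith
    subst hc2; subst hd2
    by_cases hk0 : 1 - c₁ * d₁ = 0
    · have hc11 : c₁ ≤ 1 := by linarith
      have hd11 : d₁ ≤ 1 := by linarith
      have hc1e : c₁ = 1 := by nlinarith
      exfalso; apply huw
      rw [hue, hc1e]; simp
    · have hkpos : 0 < 1 - c₁ * d₁ := by
        rcases lt_trichotomy (1 - c₁ * d₁) 0 with h | h | h
        · nlinarith
        · exact absurd h hk0
        · exact h
      refine combo2_mem hz2 hz1 (c := (c₁ * (1 - d₁)) / (1 - c₁ * d₁)) ?_ ?_ ?_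
      · positivity
      · rw [div_le_one hkpos]; nlinarith
      · funext i
        have e1 := congrFun hue i
        have e2 := congrFun hwe i
        simp [Pi.add_apply, Pi.smul_apply, smul_eq_mul] at e1 e2 ⊢
        have key : (1 - c₁ * d₁) * u i = c₁ * (1 - d₁) * z2 i + (1 - c₁) * z1 i := by
          linear_combination e1 + c₁ * e2
        field_simp
        linear_combination key

lemma witness_construction (A B jp : Pt) (S : Set Pt) (s : ℝ)
    (hs : s = 1 ∨ s = -1) (hj : 0 < s * Ldet A B jp)
    (hnB : ∀ t ∈ S, s * Ldet A B t < 0 →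
        A ∉ convexHull ℝ {jp, B, t} ∧ B ∉ convexHull ℝ {jp, A, t}) :
    ∀ (n : ℕ) (T : Finset Pt), ↑T ⊆ S ∪ segment ℝ A B →
      (T.filter fun p => s * Ldet A B p < 0).card ≤ n →
      jp ∈ convexHull ℝ (↑T : Set Pt) →
      jp ∈ convexHull ℝ ({p ∈ S | 0 ≤ s * Ldet A B p} ∪ segment ℝ A B) := by
  classical
  have hsne : s ≠ 0 := by rcases hs with rfl | rfl <;> norm_num
  have hgood : ∀ (T : Finset Pt), ↑T ⊆ S ∪ segment ℝ A B →
      (¬ ∃ t ∈ T, s * Ldet A B t < 0) →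
      jp ∈ convexHull ℝ (↑T : Set Pt) →
      jp ∈ convexHull ℝ ({p ∈ S | 0 ≤ s * Ldet A B p} ∪ segment ℝ A B) := by
    intro T hTsub hnobad hjp
    refine convexHull_mono ?_ hjp
    intro p hp
    rcases hTsub hp with hpS | hpseg
    · left
      refine ⟨hpS, ?_⟩
      by_contra hlt
      exact hnobad ⟨p, hp, not_le.1 hlt⟩
    · right; exact hpseg
  intro n
  induction n with
  | zero =>
    intro T hTsub hcard hjp
    refine hgood T hTsub ?_ hjp
    rintro ⟨t, htT, htbad⟩
    have : t ∈ T.filter fun p => s * Ldet A B p < 0 := Finset.mem_filter.2 ⟨htT, htbad⟩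
    have := Finset.card_pos.2 ⟨t, this⟩
    omega
  | succ n ih =>
    intro T hTsub hcard hjp
    by_cases hbad : ∃ t ∈ T, s * Ldet A B t < 0
    · obtain ⟨t, htT, htbad⟩ := hbad
      have htS : t ∈ S := by
        rcases hTsub (Finset.mem_coe.2 htT) with h | h
        · exact h
        · exfalso
          have := seg_Ldet_zero h
          rw [this, mul_zero] at htbad
          exact lt_irrefl 0 htbad
      set T' := T.erase t with hT'
      have hfiltcard : (T'.filter fun p => s * Ldet A B p < 0).card ≤ n := by
        have hsub : T'.filter (fun p => s * Ldet A B p < 0) ⊆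
            (T.filter fun p => s * Ldet A B p < 0).erase t := by
          intro p hp
          rw [Finset.mem_filter] at hp
          refine Finset.mem_erase.2 ⟨(Finset.mem_erase.1 hp.1).1,
            Finset.mem_filter.2 ⟨(Finset.mem_erase.1 hp.1).2, hp.2⟩⟩
        have h1 := Finset.card_le_card hsub
        have h2 : t ∈ T.filter fun p => s * Ldet A B p < 0 :=
          Finset.mem_filter.2 ⟨htT, htbad⟩
        rw [Finset.card_erase_of_mem h2] at h1
        omega
      have hins : ↑T = insert t (↑T' : Set Pt) := by
        rw [hT', ← Finset.coe_insert, Finset.insert_erase htT]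
      rw [hins] at hjp
      rcases T'.eq_empty_or_nonempty with hT'e | hT'ne
      · rw [hT'e] at hjp
        simp [convexHull_singleton] at hjp
        rw [hjp] at hj; linarith
      · have hT'ne' : (↑T' : Set Pt).Nonempty := by
          obtain ⟨x, hx⟩ := hT'ne; exact ⟨x, Finset.mem_coe.2 hx⟩
        rw [convexHull_insert hT'ne', mem_convexJoin] at hjp
        obtain ⟨t₀, ht₀, z, hz, hseg⟩ := hjp
        rw [Set.mem_singleton_iff] at ht₀
        rw [ht₀] at hseg
        obtain ⟨c, d, hc, hd, hcd, hje⟩ := seg_combo hseg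
        have hd' : d = 1 - c := by linarith
        subst hd'
        have hc1 : c ≤ 1 := by linarith
        by_cases hc0 : c = 0
        · subst hc0
          have hjz : jp = z := by rw [hje]; simp
          rw [← hjz] at hz
          have hT'sub : (↑T' : Set Pt) ⊆ S ∪ segment ℝ A B := by
            intro p hp
            apply hTsub
            rw [hins]; exact Set.mem_insert_of_mem _ hp
          exact ih T' hT'sub hfiltcard hz
        · have hcpos : 0 < c := lt_of_le_of_ne hc (Ne.symm hc0)
          set ℓj := s * Ldet A B jp with hℓj
          set ℓt := s * Ldet A B t with hℓt
          have hden : 0 < ℓj - ℓt := by linarith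
          set ν := ℓj / (ℓj - ℓt) with hν
          have hν0 : 0 < ν := div_pos hj hden
          have hν1 : ν < 1 := by
            rw [hν, div_lt_one hden]; linarith
          set m := (1 - ν) • jp + ν • t with hm
          have hmi : ∀ i, m i = (1 - ν) * jp i + ν * t i := by
            intro i; rw [hm]; simp [Pi.add_apply, Pi.smul_apply, smul_eq_mul]
          have hLm : Ldet A B m = 0 := by
            have h1 : s * Ldet A B m = (1 - ν) * ℓj + ν * ℓt := by
              rw [hm, Ldet_combo2]; rw [hℓj, hℓt]; ring
            have h2 : (1 - ν) * ℓj + ν * ℓt = 0 := by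
              rw [hν]; field_simp; ring
            rw [h2] at h1
            rcases mul_eq_zero.1 h1 with h | h
            · exact absurd h hsne
            · exact h
          have hAB : A ≠ B := by
            intro hABeq
            have : Ldet A B jp = 0 := by rw [hABeq]; unfold Ldet; ring
            rw [hℓj] at hj
            rw [this, mul_zero] at hj; exact lt_irrefl 0 hj
          obtain ⟨μ, hμ⟩ := line_param hAB hLm
          have hlinei : ∀ i, m i = A i + μ * (B i - A i) := by
            intro i
            have := congrFun hμ i
            simpa [Pi.add_apply, Pi.sub_apply, Pi.smul_apply, smul_eq_mul] using this
          have hjei : ∀ i, jp i = c * t i + (1 - c) * z i := by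
            intro i
            have := congrFun hje i
            simpa [Pi.add_apply, Pi.smul_apply, smul_eq_mul] using this
          by_cases hμ0 : 0 ≤ μ
          · by_cases hμ1 : μ ≤ 1
            · -- m lies on the segment [A,B]; recurse
              have hmseg : m ∈ segment ℝ A B := by
                rw [hμ]; exact mem_seg_of_param hμ0 hμ1
              set k := ν + c * (1 - ν) with hk
              have hkpos : 0 < k := by nlinarith
              set T'' := insert m T' with hT''
              have hT''sub : ↑T'' ⊆ S ∪ segment ℝ A B := by
                rw [hT'', Finset.coe_insert]
                intro p hp
                rcases Set.mem_insert_iff.1 hp with rfl | hp'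
                · right; exact hmseg
                · exact hTsub (by rw [hins]; exact Set.mem_insert_of_mem _ hp')
              have hT''card : (T''.filter fun p => s * Ldet A B p < 0).card ≤ n := by
                rw [hT'', Finset.filter_insert, if_neg (by
                  rw [hLm, mul_zero]; exact lt_irrefl 0)]
                exact hfiltcard
              have hmmem : m ∈ (↑T'' : Set Pt) := by
                rw [hT'', Finset.coe_insert]
                exact Set.mem_insert _ _
              have hjp'' : jp ∈ convexHull ℝ (↑T'' : Set Pt) := by
                refine combo2_mem (x := m) (y := z) ?_ ?_ (c := c / k) ?_ ?_ ?_
                · exact subset_convexHull ℝ _ hmmem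
                · refine convexHull_mono ?_ hz
                  rw [hT'', Finset.coe_insert]
                  exact Set.subset_insert _ _
                · positivity
                · rw [div_le_one hkpos]; nlinarith
                · funext i
                  have e1 := hjei i
                  have e2 := hmi i
                  simp only [Pi.add_apply, Pi.smul_apply, smul_eq_mul]
                  have key : k * jp i = c * m i + ν * (1 - c) * z i := by
                    rw [hk]; linear_combination ν * e1 - c * e2
                  have h1c : (1 : ℝ) - c / k = ν * (1 - c) / k := by
                    field_simp; rw [hk]; ring
                  rw [h1c]
                  field_simp
                  linear_combination key
              exact ih T'' hT''sub hT''card hjp''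
            · -- μ > 1 : B ∈ conv {jp, A, t}, contradiction
              exfalso
              push_neg at hμ1
              have hμpos : 0 < μ := by linarith
              have hBmem : B ∈ convexHull ℝ ({jp, A, t} : Set Pt) := by
                refine mem_convexHull_triple (p := jp) (q := A) (r := t)
                  (Set.mem_insert _ _) (by simp) (by simp)
                  (α := (1 - ν) / μ) (β := (μ - 1) / μ) (γ := ν / μ)
                  (div_nonneg (by linarith) (by linarith))
                  (div_nonneg (by linarith) (by linarith))
                  (div_nonneg (by linarith) (by linarith)) ?_ ?_
                · field_simp; ring
                · funext i
                  have e2 := hmi i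
                  have e3 := hlinei i
                  simp only [Pi.add_apply, Pi.smul_apply, smul_eq_mul]
                  have key : μ * B i = (1 - ν) * jp i + (μ - 1) * A i + ν * t i := by
                    linear_combination e2 - e3
                  field_simp
                  linear_combination key
              exact (hnB t htS htbad).2 hBmem
          · -- μ < 0 : A ∈ conv {jp, B, t}, contradiction
            exfalso
            push_neg at hμ0
            have h1μ : 0 < 1 - μ := by linarith
            have hAmem : A ∈ convexHull ℝ ({jp, B, t} : Set Pt) := by
              refine mem_convexHull_triple (p := jp) (q := B) (r := t)
                (Set.mem_insert _ _) (by simp) (by simp)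
                (α := (1 - ν) / (1 - μ)) (β := (-μ) / (1 - μ)) (γ := ν / (1 - μ))
                (div_nonneg (by linarith) (by linarith))
                (div_nonneg (by linarith) (by linarith))
                (div_nonneg (by linarith) (by linarith)) ?_ ?_
              · field_simp; ring
              · funext i
                have e2 := hmi i
                have e3 := hlinei i
                simp only [Pi.add_apply, Pi.smul_apply, smul_eq_mul]
                have key : (1 - μ) * A i = (1 - ν) * jp i + (-μ) * B i + ν * t i := by
                  linear_combination e2 - e3
                field_simp
                linear_combination key
            exact (hnB t htS htbad).1 hAmem
    · exact hgood T hTsub hbad hjp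

lemma sign_cases {x : ℝ} (h : x ≠ 0) : Real.sign x = 1 ∨ Real.sign x = -1 := by
  rcases lt_trichotomy x 0 with h' | h' | h'
  · right; exact Real.sign_of_neg h'
  · exact absurd h' h
  · left; exact Real.sign_of_pos h'

lemma sign_mul_self_pos {x : ℝ} (h : x ≠ 0) : 0 < Real.sign x * x := by
  rcases lt_trichotomy x 0 with h' | h' | h'
  · rw [Real.sign_of_neg h']; nlinarith
  · exact absurd h' h
  · rw [Real.sign_of_pos h']; nlinarith

lemma sign_eq_of_mul_pos {s x : ℝ} (hs : s = 1 ∨ s = -1) (h : 0 < s * x) :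
    Real.sign x = s := by
  rcases hs with rfl | rfl
  · exact Real.sign_of_pos (by linarith)
  · exact Real.sign_of_neg (by nlinarith)

lemma smul_neg_of_sign_eq_neg {s x : ℝ} (hs : s = 1 ∨ s = -1)
    (h : Real.sign x = -s) (hx : x ≠ 0) : s * x < 0 := by
  have := sign_mul_self_pos hx
  rw [h] at this
  nlinarith

lemma smul_pos_of_sign_eq {s x : ℝ} (h : Real.sign x = s) (hx : x ≠ 0) :
    0 < s * x := by
  have := sign_mul_self_pos hx
  rw [h] at this; exact this

lemma sLdet_nonneg_of_mem_convexHull {a b x : Pt} {s : ℝ} {S : Set Pt}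
    (hx : x ∈ convexHull ℝ S) (hS : ∀ p ∈ S, 0 ≤ s * Ldet a b p) :
    0 ≤ s * Ldet a b x := by
  rw [convexHull_eq] at hx
  obtain ⟨ι, t, w, z, hw0, hw1, hz, hcm⟩ := hx
  rw [← hcm, Ldet_centerMass t w z hw1, Finset.mul_sum]
  refine Finset.sum_nonneg fun i hi => ?_
  have := mul_nonneg (hw0 i hi) (hS _ (hz i hi))
  nlinarith [this]

lemma eq_of_sLdet_eq_zero {a b x y : Pt} {s : ℝ} {S : Set Pt}
    (hx : x ∈ convexHull ℝ S) (hS : ∀ p ∈ S, 0 ≤ s * Ldet a b p)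
    (hx0 : s * Ldet a b x = 0) (hy : ∀ p ∈ S, s * Ldet a b p = 0 → p = y) : x = y := by
  rw [convexHull_eq] at hx
  obtain ⟨ι, t, w, z, hw0, hw1, hz, hcm⟩ := hx
  have hsum : ∑ i ∈ t, w i * (s * Ldet a b (z i)) = 0 := by
    have : s * Ldet a b x = s * ∑ i ∈ t, w i * Ldet a b (z i) := by
      rw [← hcm, Ldet_centerMass t w z hw1]
    rw [this] at hx0
    rw [← hx0, Finset.mul_sum]
    apply Finset.sum_congr rfl; intro i _; ring
  have hterm := (Finset.sum_eq_zero_iff_of_nonneg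
    (fun i hi => mul_nonneg (hw0 i hi) (hS _ (hz i hi)))).1 hsum
  have hzy : ∀ i ∈ t, w i • z i = w i • y := by
    intro i hi
    by_cases hwi : w i = 0
    · rw [hwi]; simp
    · have hLz : s * Ldet a b (z i) = 0 := by
        rcases mul_eq_zero.1 (hterm i hi) with h | h
        · exact absurd h hwi
        · exact h
      rw [hy _ (hz i hi) hLz]
  have hx' : x = ∑ i ∈ t, w i • z i := by
    rw [← hcm, Finset.centerMass_eq_of_sum_1 _ _ hw1]
  rw [hx', Finset.sum_congr rfl hzy, ← Finset.sum_smul, hw1, one_smul]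

lemma genpos_mono {X Y : Set Pt} (h : GenPos X) (hYX : Y ⊆ X) : GenPos Y :=
  fun x hx y hy z hz hxy hyz hxz => h x (hYX hx) y (hYX hy) z (hYX hz) hxy hyz hxz

lemma ldet_ne_zero_of_genpos {X : Set Pt} (h : GenPos X) {x y z : Pt}
    (hx : x ∈ X) (hy : y ∈ X) (hz : z ∈ X) (hxy : x ≠ y) (hyz : y ≠ z) (hxz : x ≠ z) :
    Ldet x y z ≠ 0 :=
  fun h0 => h x hx y hy z hz hxy hyz hxz (collinear_of_Ldet_eq_zero hxy h0)


lemma sign_flip {s L : ℝ} (hs : s = 1 ∨ s = -1) (hL : L ≠ 0) (h : s * L < 0) :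
    Real.sign L = -s := by
  rcases hs with rfl | rfl
  · exact Real.sign_of_neg (by linarith)
  · have hp : 0 < L := by nlinarith
    rw [Real.sign_of_pos hp]; norm_num

lemma smul_ne_zero' {s L : ℝ} (hs : s = 1 ∨ s = -1) (hL : L ≠ 0) : s * L ≠ 0 := by
  rcases hs with rfl | rfl <;> simpa using hL

lemma main_lemma (f g : J → Pt) : ∀ (n : ℕ) (K : Set J), K.ncard ≤ n →
    Set.InjOn f K → Set.InjOn g K → GenPos (f '' K) → GenPos (g '' K) →
    (∀ Y : Set J, Y ⊆ K → ∀ x ∈ K,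
      (f x ∈ convexHull ℝ (f '' Y) ↔ g x ∈ convexHull ℝ (g '' Y))) →
    (∀ a ∈ K, ∀ b ∈ K, ∀ c ∈ K,
      f a ∉ convexHull ℝ (f '' (K \ {a})) → f b ∉ convexHull ℝ (f '' (K \ {b})) →
      f c ∉ convexHull ℝ (f '' (K \ {c})) →
      a ≠ b → b ≠ c → a ≠ c → osign (f a) (f b) (f c) = osign (g a) (g b) (g c)) →
    ∀ a ∈ K, ∀ b ∈ K, ∀ c ∈ K, a ≠ b → b ≠ c → a ≠ c →
      osign (f a) (f b) (f c) = osign (g a) (g b) (g c) := by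
  intro n
  induction n with
  | zero =>
    intro K hK _ _ _ _ _ _ a ha
    have hKe : K = ∅ := (Set.ncard_eq_zero (Set.toFinite K)).1 (Nat.le_zero.1 hK)
    rw [hKe] at ha
    exact absurd ha (Set.notMem_empty a)
  | succ n ih =>
    intro K hK hinjf hinjg hgf hgg hcompat hext
    by_cases hallext : ∀ x ∈ K, f x ∉ convexHull ℝ (f '' (K \ {x}))
    · intro a ha b hb c hc hab hbc hac
      exact hext a ha b hb c hc (hallext a ha) (hallext b hb) (hallext c hc) hab hbc hac
    · push_neg at hallext
      obtain ⟨j, hjK, hjin⟩ := hallext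
      set K' := K \ {j} with hK'def
      have hK'sub : K' ⊆ K := Set.diff_subset
      have hjK' : j ∉ K' := fun h => h.2 rfl
      have hK'card : K'.ncard ≤ n := by
        have h1 : K'.ncard = K.ncard - 1 :=
          Set.ncard_diff_singleton_of_mem hjK
        have h2 : 0 < K.ncard := (Set.ncard_pos (Set.toFinite K)).2 ⟨j, hjK⟩
        omega
      have hjin' : f j ∈ convexHull ℝ (f '' K') := hjin
      have hpres : ∀ x ∈ K', f x ∈ convexHull ℝ (f '' (K \ {x})) →
          f x ∈ convexHull ℝ (f '' (K' \ {x})) := by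
        intro x hxK' hxin
        have hxj : x ≠ j := fun h => hjK' (h ▸ hxK')
        have e1 : K \ {x} = insert j (K' \ {x}) := by
          ext y
          simp only [hK'def, Set.mem_diff, Set.mem_singleton_iff, Set.mem_insert_iff]
          constructor
          · rintro ⟨hyK, hyx⟩
            by_cases hyj : y = j
            · exact Or.inl hyj
            · exact Or.inr ⟨⟨hyK, hyj⟩, hyx⟩
          · rintro (rfl | ⟨⟨hyK, _⟩, hyx⟩)
            · exact ⟨hjK, fun h => hxj h.symm⟩
            · exact ⟨hyK, hyx⟩
        have e3 : K' = insert x (K' \ {x}) := by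
          rw [Set.insert_diff_singleton, Set.insert_eq_of_mem hxK']
        apply antiexchange_pt (w := f j)
          (S := f '' (K' \ {x}))
        · exact fun h => hxj (hinjf (hK'sub hxK') hjK h)
        · rw [← Set.image_insert_eq, ← e1]; exact hxin
        · rw [← Set.image_insert_eq, ← e3]; exact hjin'
      have ihall := ih K' hK'card (hinjf.mono hK'sub) (hinjg.mono hK'sub)
        (genpos_mono hgf (Set.image_mono hK'sub))
        (genpos_mono hgg (Set.image_mono hK'sub))
        (fun Y hY x hx => hcompat Y (hY.trans hK'sub) x (hK'sub hx))
        (fun a ha b hb c hc hea heb hec hab hbc hac =>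
          hext a (hK'sub ha) b (hK'sub hb) c (hK'sub hc)
            (fun h => hea (hpres a ha h)) (fun h => heb (hpres b hb h))
            (fun h => hec (hpres c hc h)) hab hbc hac)
      have key : ∀ a ∈ K', ∀ b ∈ K', a ≠ b →
          osign (f a) (f b) (f j) = osign (g a) (g b) (g j) := by
        intro a ha b hb hab
        have haK := hK'sub ha
        have hbK := hK'sub hb
        have haj : a ≠ j := fun h => hjK' (h ▸ ha)
        have hbj : b ≠ j := fun h => hjK' (h ▸ hb)
        have hAB : f a ≠ f b := fun h => hab (hinjf haK hbK h)
        have hmemA : f a ∈ f '' K := ⟨a, haK, rfl⟩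
        have hmemB : f b ∈ f '' K := ⟨b, hbK, rfl⟩
        have hmemj : f j ∈ f '' K := ⟨j, hjK, rfl⟩
        have hLj : Ldet (f a) (f b) (f j) ≠ 0 :=
          ldet_ne_zero_of_genpos hgf hmemA hmemB hmemj hAB
            (fun h => hbj (hinjf hbK hjK h)) (fun h => haj (hinjf haK hjK h))
        have hLgj : Ldet (g a) (g b) (g j) ≠ 0 :=
          ldet_ne_zero_of_genpos hgg ⟨a, haK, rfl⟩ ⟨b, hbK, rfl⟩ ⟨j, hjK, rfl⟩
            (fun h => hab (hinjg haK hbK h)) (fun h => hbj (hinjg hbK hjK h))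
            (fun h => haj (hinjg haK hjK h))
        set s := Real.sign (Ldet (f a) (f b) (f j)) with hsdef
        have hs : s = 1 ∨ s = -1 := sign_cases hLj
        have hsj : 0 < s * Ldet (f a) (f b) (f j) := sign_mul_self_pos hLj
        rw [osign_eq, osign_eq, ← hsdef]
        symm
        apply sign_eq_of_mul_pos hs
        by_cases hwB : ∃ t, t ∈ K' ∧ t ≠ a ∧ t ≠ b ∧
            (f a ∈ convexHull ℝ {f j, f b, f t} ∨ f b ∈ convexHull ℝ {f j, f a, f t})
        · obtain ⟨t, htK', hta, htb, hcase⟩ := hwB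
          have htK := hK'sub htK'
          have htj : t ≠ j := fun h => hjK' (h ▸ htK')
          have hLt : Ldet (f a) (f b) (f t) ≠ 0 :=
            ldet_ne_zero_of_genpos hgf hmemA hmemB ⟨t, htK, rfl⟩ hAB
              (fun h => htb (hinjf htK hbK h.symm)) (fun h => hta (hinjf htK haK h.symm))
          have hts : s * Ldet (f a) (f b) (f t) < 0 := by
            by_contra hge
            push_neg at hge
            have hgt : 0 < s * Ldet (f a) (f b) (f t) :=
              lt_of_le_of_ne hge (Ne.symm (smul_ne_zero' hs hLt))
            rcases hcase with hcaseA | hcaseB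
            · have : f a = f b := by
                refine eq_of_sLdet_eq_zero (a := f a) (b := f b) (s := s)
                  (S := {f j, f b, f t}) hcaseA ?_ ?_ ?_
                · rintro p (rfl | rfl | rfl)
                  · exact le_of_lt hsj
                  · rw [Ldet_self_right]; simp
                  · exact le_of_lt hgt
                · rw [Ldet_self_left]; simp
                · rintro p (rfl | rfl | rfl)
                  · exact fun h => absurd h (ne_of_gt hsj)
                  · exact fun _ => rfl
                  · exact fun h => absurd h (ne_of_gt hgt)
              exact hAB this
            · have : f b = f a := by
                refine eq_of_sLdet_eq_zero (a := f a) (b := f b) (s := s)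
                  (S := {f j, f a, f t}) hcaseB ?_ ?_ ?_
                · rintro p (rfl | rfl | rfl)
                  · exact le_of_lt hsj
                  · rw [Ldet_self_left]; simp
                  · exact le_of_lt hgt
                · rw [Ldet_self_right]; simp
                · rintro p (rfl | rfl | rfl)
                  · exact fun h => absurd h (ne_of_gt hsj)
                  · exact fun _ => rfl
                  · exact fun h => absurd h (ne_of_gt hgt)
              exact hAB this.symm
          have hsignf_t : Real.sign (Ldet (f a) (f b) (f t)) = -s := sign_flip hs hLt hts
          have hLgt : Ldet (g a) (g b) (g t) ≠ 0 :=
            ldet_ne_zero_of_genpos hgg ⟨a, haK, rfl⟩ ⟨b, hbK, rfl⟩ ⟨t, htK, rfl⟩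
              (fun h => hab (hinjg haK hbK h))
              (fun h => htb (hinjg htK hbK h.symm)) (fun h => hta (hinjg htK haK h.symm))
          have hsigng_t : Real.sign (Ldet (g a) (g b) (g t)) = -s := by
            have heq := ihall a ha b hb t htK' hab (Ne.symm htb) (Ne.symm hta)
            rw [osign_eq, osign_eq] at heq
            rw [← heq]; exact hsignf_t
          have hgt_neg : s * Ldet (g a) (g b) (g t) < 0 := by
            have := sign_mul_self_pos hLgt
            rw [hsigng_t] at this
            nlinarith
          by_contra hnot
          push_neg at hnot
          have hlt : s * Ldet (g a) (g b) (g j) < 0 :=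
            lt_of_le_of_ne hnot (smul_ne_zero' hs hLgj)
          rcases hcase with hcaseA | hcaseB
          · have hYsub : ({j, b, t} : Set J) ⊆ K := by
              rintro y (rfl | rfl | rfl)
              · exact hjK
              · exact hbK
              · exact htK
            have hga : g a ∈ convexHull ℝ {g j, g b, g t} := by
              have h1 := (hcompat {j, b, t} hYsub a haK).1 (by
                rw [Set.image_insert_eq, Set.image_insert_eq, Set.image_singleton]
                exact hcaseA)
              rwa [Set.image_insert_eq, Set.image_insert_eq, Set.image_singleton] at h1
            have : g a = g b := by
              refine eq_of_sLdet_eq_zero (a := g a) (b := g b) (s := -s)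
                (S := {g j, g b, g t}) hga ?_ ?_ ?_
              · rintro p (rfl | rfl | rfl)
                · nlinarith
                · rw [Ldet_self_right]; simp
                · nlinarith
              · rw [Ldet_self_left]; simp
              · rintro p (rfl | rfl | rfl)
                · intro h; exfalso; nlinarith
                · exact fun _ => rfl
                · intro h; exfalso; nlinarith
            exact absurd this (fun h => hab (hinjg haK hbK h))
          · have hYsub : ({j, a, t} : Set J) ⊆ K := by
              rintro y (rfl | rfl | rfl)
              · exact hjK
              · exact haK
              · exact htK
            have hgb : g b ∈ convexHull ℝ {g j, g a, g t} := by
              have h1 := (hcompat {j, a, t} hYsub b hbK).1 (by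
                rw [Set.image_insert_eq, Set.image_insert_eq, Set.image_singleton]
                exact hcaseB)
              rwa [Set.image_insert_eq, Set.image_insert_eq, Set.image_singleton] at h1
            have : g b = g a := by
              refine eq_of_sLdet_eq_zero (a := g a) (b := g b) (s := -s)
                (S := {g j, g a, g t}) hgb ?_ ?_ ?_
              · rintro p (rfl | rfl | rfl)
                · nlinarith
                · rw [Ldet_self_left]; simp
                · nlinarith
              · rw [Ldet_self_right]; simp
              · rintro p (rfl | rfl | rfl)
                · intro h; exfalso; nlinarith
                · exact fun _ => rfl
                · intro h; exfalso; nlinarith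
            exact absurd this (fun h => hab (hinjg haK hbK h.symm))
        · push_neg at hwB
          have hnB : ∀ tp ∈ f '' K', s * Ldet (f a) (f b) tp < 0 →
              f a ∉ convexHull ℝ {f j, f b, tp} ∧ f b ∉ convexHull ℝ {f j, f a, tp} := by
            rintro tp ⟨t, htK', rfl⟩ htneg
            have hta : t ≠ a := by
              rintro rfl
              rw [Ldet_self_left, mul_zero] at htneg
              exact lt_irrefl 0 htneg
            have htb : t ≠ b := by
              rintro rfl
              rw [Ldet_self_right, mul_zero] at htneg
              exact lt_irrefl 0 htneg
            exact hwB t htK' hta htb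
          set T0 := (Set.toFinite (f '' K')).toFinset with hT0
          have hT0coe : (↑T0 : Set Pt) = f '' K' := Set.Finite.coe_toFinset _
          have hres := witness_construction (f a) (f b) (f j) (f '' K') s hs hsj hnB
            T0.card T0 (by rw [hT0coe]; exact Set.subset_union_left)
            (Finset.card_filter_le _ _) (by rw [hT0coe]; exact hjin')
          set SG : Set J := {x ∈ K' | x = a ∨ x = b ∨ osign (f a) (f b) (f x) = s}
            with hSG
          have haSG : a ∈ SG := ⟨ha, Or.inl rfl⟩
          have hbSG : b ∈ SG := ⟨hb, Or.inr (Or.inl rfl)⟩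
          have hsub2 : ({p ∈ f '' K' | 0 ≤ s * Ldet (f a) (f b) p} ∪
              segment ℝ (f a) (f b)) ⊆ convexHull ℝ (f '' SG) := by
            rintro p hp
            rcases hp with ⟨⟨x, hxK', rfl⟩, hge⟩ | hpseg
            · apply subset_convexHull
              refine ⟨x, ?_, rfl⟩
              by_cases hxa : x = a
              · subst hxa; exact haSG
              · by_cases hxb : x = b
                · subst hxb; exact hbSG
                · have hLx : Ldet (f a) (f b) (f x) ≠ 0 :=
                    ldet_ne_zero_of_genpos hgf hmemA hmemB ⟨x, hK'sub hxK', rfl⟩ hAB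
                      (fun h => hxb (hinjf hbK (hK'sub hxK') h).symm)
                      (fun h => hxa (hinjf haK (hK'sub hxK') h).symm)
                  have hpos : 0 < s * Ldet (f a) (f b) (f x) :=
                    lt_of_le_of_ne hge (Ne.symm (smul_ne_zero' hs hLx))
                  exact ⟨hxK', Or.inr (Or.inr (by
                    rw [osign_eq]; exact sign_eq_of_mul_pos hs hpos))⟩
            · obtain ⟨c1, d1, hc1, hd1, hcd1, rfl⟩ := seg_combo hpseg
              have hd1' : d1 = 1 - c1 := by linarith
              refine combo2_mem (subset_convexHull ℝ _ ⟨a, haSG, rfl⟩)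
                (subset_convexHull ℝ _ ⟨b, hbSG, rfl⟩) hc1 (by linarith) ?_
              rw [hd1']
          have hjSG : f j ∈ convexHull ℝ (f '' SG) :=
            convexHull_min hsub2 (convex_convexHull ℝ _) hres
          have hSGsub : SG ⊆ K := fun x hx => hK'sub hx.1
          have hgj : g j ∈ convexHull ℝ (g '' SG) := (hcompat SG hSGsub j hjK).1 hjSG
          have hgood : ∀ p ∈ g '' SG, 0 ≤ s * Ldet (g a) (g b) p := by
            rintro p ⟨x, hxSG, rfl⟩
            rcases hxSG.2 with rfl | rfl | hsx
            · rw [Ldet_self_left]; simp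
            · rw [Ldet_self_right]; simp
            · have hxa : x ≠ a := by
                rintro rfl
                rw [osign_eq, Ldet_self_left, Real.sign_zero] at hsx
                rcases hs with h | h <;> rw [← hsx] at h <;> norm_num at h
              have hxb : x ≠ b := by
                rintro rfl
                rw [osign_eq, Ldet_self_right, Real.sign_zero] at hsx
                rcases hs with h | h <;> rw [← hsx] at h <;> norm_num at h
              have heq := ihall a ha b hb x hxSG.1 hab (Ne.symm hxb) (Ne.symm hxa)
              have hsgx : osign (g a) (g b) (g x) = s := by rw [← heq]; exact hsx
              rw [osign_eq] at hsgx
              by_cases hL0 : Ldet (g a) (g b) (g x) = 0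
              · rw [hL0]; simp
              · exact le_of_lt (smul_pos_of_sign_eq hsgx hL0)
          have hfinal : 0 ≤ s * Ldet (g a) (g b) (g j) :=
            sLdet_nonneg_of_mem_convexHull hgj hgood
          exact lt_of_le_of_ne hfinal (Ne.symm (smul_ne_zero' hs hLgj))
      intro a ha b hb c hc hab hbc hac
      by_cases hcj : c = j
      · subst hcj
        have haK' : a ∈ K' := ⟨ha, by simp [hac]⟩
        have hbK' : b ∈ K' := ⟨hb, by simp [hbc]⟩
        exact key a haK' b hbK' hab
      · by_cases hbj : b = j
        · subst hbj
          have haK' : a ∈ K' := ⟨ha, by simp [hab]⟩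
          have hcK' : c ∈ K' := ⟨hc, by simp [hcj]⟩
          rw [osign_cycle (f c) (f a) (f b), osign_cycle (g c) (g a) (g b)]
          exact key c hcK' a haK' (Ne.symm hac)
        · by_cases haj : a = j
          · subst haj
            have hbK' : b ∈ K' := ⟨hb, by simp [hbj]⟩
            have hcK' : c ∈ K' := ⟨hc, by simp [hcj]⟩
            rw [← osign_cycle (f a) (f b) (f c), ← osign_cycle (g a) (g b) (g c)]
            exact key b hbK' c hcK' hbc
          · exact ihall a ⟨ha, by simp [haj]⟩ b ⟨hb, by simp [hbj]⟩
              c ⟨hc, by simp [hcj]⟩ hab hbc hac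


end OTAux

/-- Two realizations of a realizable convex 4-geometry inducing the same
clockwise circular order on the outermost layer induce the same order type on all of
`J`. -/
theorem same_order_on_layer_same_order_type (G : ConvexGeometry J) (h4 : G.Is4Geometry)
    (f g : J → (Fin 2 → ℝ)) (hf : IsRealization G f) (hg : IsRealization G g)
    (hL0 : ∀ a ∈ G.L0, ∀ b ∈ G.L0, ∀ c ∈ G.L0, a ≠ b → b ≠ c → a ≠ c →
      osign (f a) (f b) (f c) = osign (g a) (g b) (g c)) :
    ∀ a b c : J, a ≠ b → b ≠ c → a ≠ c →
      osign (f a) (f b) (f c) = osign (g a) (g b) (g c) := by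
  classical
  obtain ⟨hfinj, hfgp, hfcl⟩ := hf
  obtain ⟨hginj, hggp, hgcl⟩ := hg
  have hfc : ∀ (Y : Set J) (x : J), f x ∈ convexHull ℝ (f '' Y) ↔ x ∈ G.cl Y := by
    intro Y x
    constructor
    · intro h
      have h2 : f x ∈ convexHull ℝ (f '' Y) ∩ Set.range f := ⟨h, ⟨x, rfl⟩⟩
      rw [← hfcl Y] at h2
      obtain ⟨y, hy, hyx⟩ := h2
      rwa [hfinj hyx] at hy
    · intro h
      have h2 : f x ∈ f '' (G.cl Y) := ⟨x, h, rfl⟩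
      rw [hfcl Y] at h2
      exact h2.1
  have hgc : ∀ (Y : Set J) (x : J), g x ∈ convexHull ℝ (g '' Y) ↔ x ∈ G.cl Y := by
    intro Y x
    constructor
    · intro h
      have h2 : g x ∈ convexHull ℝ (g '' Y) ∩ Set.range g := ⟨h, ⟨x, rfl⟩⟩
      rw [← hgcl Y] at h2
      obtain ⟨y, hy, hyx⟩ := h2
      rwa [hginj hyx] at hy
    · intro h
      have h2 : g x ∈ g '' (G.cl Y) := ⟨x, h, rfl⟩
      rw [hgcl Y] at h2
      exact h2.1
  have hL0iff : ∀ x : J, (f x ∉ convexHull ℝ (f '' (Set.univ \ {x}))) ↔ x ∈ G.L0 :=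
    fun x => not_congr (hfc (Set.univ \ {x}) x)
  intro a b c hab hbc hac
  refine OTAux.main_lemma f g (Set.univ : Set J).ncard Set.univ le_rfl
    hfinj.injOn hginj.injOn ?_ ?_ ?_ ?_ a (Set.mem_univ a) b (Set.mem_univ b)
    c (Set.mem_univ c) hab hbc hac
  · rw [Set.image_univ]; exact hfgp
  · rw [Set.image_univ]; exact hggp
  · intro Y _ x _
    exact (hfc Y x).trans (hgc Y x).symm
  · intro a' _ b' _ c' _ hea heb hec hab' hbc' hac'
    exact hL0 a' ((hL0iff a').1 hea) b' ((hL0iff b').1 heb) c' ((hL0iff c').1 hec)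
      hab' hbc' hac'
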